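/- arXiv:2204.03799 — 3 statements merged into one kernel-verified Lean document; each statement's English description precedes it below -/
import Mathlib

section
/- Fix λ ∈ (-∞,1], weights β_g > 0, base levels A_g > 0, and increments α_{g,l} > 0 with α_{g,l} ≤ α_{g,l-1}. Define the marginal CES gain M(g,l) = β_g[(A_g + Σ_{s≤l} α_{g,s})^λ - (A_g + Σ_{s≤l-1} α_{g,s})^λ] for λ > 0 and its negation for λ < 0. Then for each fixed g, the sequence l ↦ M(g,l) is non-increasing (when λ ∈ (0,1]) or the sequence of absolute gains |M(g,l)| is non-increasing (when λ < 0). -/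
open Real

lemma key_antitone (lam : ℝ) (hlam1 : lam ≤ 1) (hlam0 : lam ≠ 0) (h : ℝ) (hh : 0 < h)
    (a b : ℝ) (ha : 0 < a) (hab : a ≤ b) :
    (0 < lam → (b + h) ^ lam - b ^ lam ≤ (a + h) ^ lam - a ^ lam) ∧
    (lam < 0 → (a + h) ^ lam - a ^ lam ≤ (b + h) ^ lam - b ^ lam) := by
  set g : ℝ → ℝ := fun x => (x + h) ^ lam - x ^ lam with hg
  have hderiv : ∀ x ∈ Set.Icc a b, HasDerivAt g
      (lam * ((x + h) ^ (lam - 1) - x ^ (lam - 1))) x := by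
    intro x hx
    have hx0 : 0 < x := lt_of_lt_of_le ha hx.1
    have h1 : HasDerivAt (fun x : ℝ => (x + h) ^ lam) (lam * (x + h) ^ (lam - 1)) x := by
      have := (Real.hasDerivAt_rpow_const (x := x + h) (p := lam)
        (Or.inl (by positivity))).comp x ((hasDerivAt_id x).add_const h)
      rw [mul_one] at this
      exact this
    have h2 : HasDerivAt (fun x : ℝ => x ^ lam) (lam * x ^ (lam - 1)) x :=
      Real.hasDerivAt_rpow_const (Or.inl hx0.ne')
    have := h1.sub h2
    exact this.congr_deriv (by ring)
  have hcont : ContinuousOn g (Set.Icc a b) := fun x hx =>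
    (hderiv x hx).continuousAt.continuousWithinAt
  have hdiff : ∀ x ∈ Set.Ioo a b, HasDerivAt g
      (lam * ((x + h) ^ (lam - 1) - x ^ (lam - 1))) x := fun x hx =>
    hderiv x (Set.mem_Icc_of_Ioo hx)
  have hsign : ∀ x ∈ Set.Ioo a b, (x + h) ^ (lam - 1) - x ^ (lam - 1) ≤ 0 := by
    intro x hx
    have hx0 : 0 < x := lt_trans ha hx.1
    have : (x + h) ^ (lam - 1) ≤ x ^ (lam - 1) :=
      Real.rpow_le_rpow_of_nonpos hx0 (by linarith) (by linarith)
    linarith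
  constructor
  · intro hpos
    have hanti : AntitoneOn g (Set.Icc a b) := by
      apply AntitoneOn.mono (antitoneOn_of_deriv_nonpos (convex_Icc a b) hcont ?_ ?_) le_rfl
      · intro x hx
        rw [interior_Icc] at hx
        exact (hdiff x hx).differentiableAt.differentiableWithinAt
      · intro x hx
        rw [interior_Icc] at hx
        rw [(hdiff x hx).deriv]
        exact mul_nonpos_of_nonneg_of_nonpos hpos.le (hsign x hx)
    exact hanti (Set.left_mem_Icc.2 hab) (Set.right_mem_Icc.2 hab) hab
  · intro hneg
    have hmono : MonotoneOn g (Set.Icc a b) := by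
      apply monotoneOn_of_deriv_nonneg (convex_Icc a b) hcont ?_ ?_
      · intro x hx
        rw [interior_Icc] at hx
        exact (hdiff x hx).differentiableAt.differentiableWithinAt
      · intro x hx
        rw [interior_Icc] at hx
        rw [(hdiff x hx).deriv]
        nlinarith [hsign x hx]
    exact hmono (Set.left_mem_Icc.2 hab) (Set.right_mem_Icc.2 hab) hab

/-- Monotone marginal CES gains along successive increments to a single group:
with M(l) = β[(A + Σ_{s≤l} α_s)^λ - (A + Σ_{s≤l-1} α_s)^λ], the gains are non-increasing
for λ ∈ (0,1], and the absolute gains are non-increasing for λ < 0. -/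
theorem stmt_6 (lam β A : ℝ) (α : ℕ → ℝ) (hlam1 : lam ≤ 1) (hlam0 : lam ≠ 0)
    (hβ : 0 < β) (hA : 0 < A) (hα : ∀ l, 0 < α l) (hmono : ∀ l, α (l + 1) ≤ α l)
    (M : ℕ → ℝ)
    (hM : ∀ l, M l =
      β * ((A + ∑ s ∈ Finset.range (l + 1), α s) ^ lam
         - (A + ∑ s ∈ Finset.range l, α s) ^ lam)) :
    ∀ l, (0 < lam → M (l + 1) ≤ M l) ∧ (lam < 0 → |M (l + 1)| ≤ |M l|) := by
  intro l
  set S : ℕ → ℝ := fun n => A + ∑ s ∈ Finset.range n, α s with hS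
  have hSpos : ∀ n, 0 < S n := by
    intro n
    have : 0 ≤ ∑ s ∈ Finset.range n, α s :=
      Finset.sum_nonneg fun i _ => (hα i).le
    simp only [hS]; linarith
  have hstep : ∀ n, S (n + 1) = S n + α n := by
    intro n; simp [hS, Finset.sum_range_succ]; ring
  have hle : S l ≤ S (l + 1) := by rw [hstep]; linarith [hα l]
  have hkey := key_antitone lam hlam1 hlam0 (α l) (hα l) (S l) (S (l + 1)) (hSpos l) hle
  constructor
  · intro hpos
    rw [hM, hM]
    have h1 : (S (l + 1) + α (l + 1)) ^ lam ≤ (S (l + 1) + α l) ^ lam :=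
      Real.rpow_le_rpow (by linarith [hSpos (l+1), hα (l+1)]) (by linarith [hmono l]) hpos.le
    have h2 := hkey.1 hpos
    have : S (l + 2) ^ lam - S (l + 1) ^ lam ≤ S (l + 1) ^ lam - S l ^ lam := by
      rw [hstep (l + 1), hstep l] at *
      linarith
    have := mul_le_mul_of_nonneg_left this hβ.le
    simpa [hS, hstep] using this
  · intro hneg
    have hSl : ∀ n, S n ≤ S (n + 1) := by
      intro n; rw [hstep]; linarith [hα n]
    have hMnonpos : ∀ n, M n ≤ 0 := by
      intro n
      rw [hM]
      have : S (n + 1) ^ lam ≤ S n ^ lam :=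
        Real.rpow_le_rpow_of_nonpos (hSpos n) (hSl n) hneg.le
      have hd : S (n + 1) ^ lam - S n ^ lam ≤ 0 := by linarith
      exact mul_nonpos_of_nonneg_of_nonpos hβ.le hd
    rw [abs_of_nonpos (hMnonpos (l + 1)), abs_of_nonpos (hMnonpos l)]
    rw [hM, hM]
    have h1 : (S (l + 1) + α l) ^ lam ≤ (S (l + 1) + α (l + 1)) ^ lam :=
      Real.rpow_le_rpow_of_nonpos (by linarith [hSpos (l+1), hα (l+1)]) (by linarith [hmono l]) hneg.le
    have h2 := hkey.2 hneg
    have : S (l + 1) ^ lam - S (l + 2) ^ lam ≤ S l ^ lam - S (l + 1) ^ lam := by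
      rw [hstep (l + 1), hstep l] at *
      linarith
    have := mul_le_mul_of_nonneg_left this hβ.le
    have hfin : -(β * (S (l + 2) ^ lam - S (l + 1) ^ lam))
        ≤ -(β * (S (l + 1) ^ lam - S l ^ lam)) := by linarith [this]
    simpa [hS] using hfin
end

section
/- As λ → -∞, the CES comparison degenerates to a leximin/levels comparison: for A₁, A₂ > 0 with A₁ < A₂ and any increments α₁, α₂ > 0, there exists λ̄ < 0 such that for all λ < λ̄, β((A₁+α₁)^λ - A₁^λ) ≤ β((A₂+α₂)^λ - A₂^λ) holds for any fixed equal weights β > 0; i.e., the group with the lower base level A₁ is ranked first in the allocation queue. -/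
/-- As λ → -∞ the CES comparison degenerates to a levels comparison: for sufficiently
negative λ, the group with the lower base level A₁ has the smaller (more negative)
marginal gain, hence is ranked first in the allocation queue. -/
theorem stmt_11 (A₁ A₂ α₁ α₂ β : ℝ) (hA₁ : 0 < A₁) (hA₁₂ : A₁ < A₂)
    (hα₁ : 0 < α₁) (hα₂ : 0 < α₂) (hβ : 0 < β) :
    ∃ lamBar < (0 : ℝ), ∀ lam < lamBar,
      β * ((A₁ + α₁) ^ lam - A₁ ^ lam) ≤ β * ((A₂ + α₂) ^ lam - A₂ ^ lam) := by
  set m : ℝ := min A₂ (A₁ + α₁) with hm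
  have hmpos : 0 < m := lt_min (hA₁.trans hA₁₂) (by linarith)
  have hA₁m : A₁ < m := lt_min hA₁₂ (by linarith)
  have hc : 0 < Real.log (m / A₁) :=
    Real.log_pos (by rw [lt_div_iff₀ hA₁]; linarith)
  have hlog2 : 0 < Real.log 2 := Real.log_pos one_lt_two
  refine ⟨-(Real.log 2) / Real.log (m / A₁),
    div_neg_of_neg_of_pos (by linarith) hc, ?_⟩
  intro lam hlam
  have h2 : (m / A₁) ^ lam < 1 / 2 := by
    rw [Real.rpow_def_of_pos (by positivity)]
    have : Real.log (m / A₁) * lam < -Real.log 2 := by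
      rw [lt_div_iff₀ hc] at hlam
      linarith [hlam]
    calc Real.exp (Real.log (m / A₁) * lam) < Real.exp (-Real.log 2) :=
          Real.exp_lt_exp.mpr this
      _ = 1 / 2 := by
          rw [Real.exp_neg, Real.exp_log (by norm_num)]; norm_num
  have hA₁pow : (0:ℝ) < A₁ ^ lam := Real.rpow_pos_of_pos hA₁ lam
  have hmle : 2 * m ^ lam ≤ A₁ ^ lam := by
    have : m ^ lam / A₁ ^ lam < 1 / 2 := by
      rw [← Real.div_rpow hmpos.le hA₁.le]; exact h2
    rw [div_lt_div_iff₀ hA₁pow (by norm_num)] at this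
    linarith
  have hlam0 : lam ≤ 0 :=
    (hlam.trans (div_neg_of_neg_of_pos (by linarith) hc)).le
  have h1 : (A₁ + α₁) ^ lam ≤ m ^ lam :=
    Real.rpow_le_rpow_of_nonpos hmpos (min_le_right _ _) hlam0
  have h2' : A₂ ^ lam ≤ m ^ lam :=
    Real.rpow_le_rpow_of_nonpos hmpos (min_le_left _ _) hlam0
  have h3 : (0:ℝ) < (A₂ + α₂) ^ lam := Real.rpow_pos_of_pos (by linarith) lam
  have := mul_le_mul_of_nonneg_left (a := β) (by linarith : (A₁ + α₁) ^ lam - A₁ ^ lam ≤ (A₂ + α₂) ^ lam - A₂ ^ lam) hβ.le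
  linarith
end

section
/- (Optimality of the queue solution for general λ) Let λ ∈ (-∞,1], λ ≠ 0, weights β_g > 0, A_g > 0, and increments α_{g,l} > 0 non-increasing in l with caps D̄_g, and assume all weighted gains are distinct. Then the allocation D*_g(W) = Σ_{l=1}^{D̄_g} 1{Q_{g,l} ≤ W}, with Q as in the queue definition, maximizes (Σ_g β_g (A_g + Σ_{l≤D_g} α_{g,l})^λ)^{1/λ} over all integer allocations with 0 ≤ D_g ≤ D̄_g and Σ_g D_g ≤ W. -/
open Finset in
/-- a down-closed subset of ℕ is a range -/
lemma prefix_lemma (s : Finset ℕ) (hdc : ∀ a b : ℕ, a ≤ b → b ∈ s → a ∈ s) :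
    s = Finset.range s.card := by
  ext i
  simp only [Finset.mem_range]
  constructor
  · intro hi
    have h1 : Finset.range (i + 1) ⊆ s := by
      intro j hj
      exact hdc j i (by simpa using Nat.lt_succ_iff.mp (Finset.mem_range.mp hj)) hi
    have := Finset.card_le_card h1
    simpa using this
  · intro hi
    by_contra hns
    have : s ⊆ Finset.range i := by
      intro j hj
      by_contra hj'
      exact hns (hdc i j (by simpa using hj') hj)
    have := Finset.card_le_card this
    simp at this
    omega

/-- the signed gain is antitone in the base -/
lemma gain_anti (lam h : ℝ) (hlam1 : lam ≤ 1) (hlam0 : lam ≠ 0) (hh : 0 ≤ h)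
    {x y : ℝ} (hx : 0 < x) (hxy : x ≤ y) :
    (if 0 < lam then (1:ℝ) else -1) * ((y + h) ^ lam - y ^ lam)
      ≤ (if 0 < lam then (1:ℝ) else -1) * ((x + h) ^ lam - x ^ lam) := by
  set c : ℝ := if 0 < lam then (1:ℝ) else -1 with hc
  have hclam : 0 < c * lam := by
    rcases lt_or_gt_of_ne hlam0 with h1 | h1
    · simp only [hc, if_neg (not_lt.mpr h1.le)]; nlinarith
    · simp only [hc, if_pos h1]; nlinarith
  have key : AntitoneOn (fun t : ℝ => c * ((t + h) ^ lam - t ^ lam)) (Set.Ici x) := by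
    have hderiv : ∀ t : ℝ, 0 < t →
        HasDerivAt (fun t : ℝ => c * ((t + h) ^ lam - t ^ lam))
          (c * (lam * (t + h) ^ (lam - 1) * 1 - lam * t ^ (lam - 1))) t := by
      intro t ht
      have h1 : HasDerivAt (fun t : ℝ => t + h) 1 t := (hasDerivAt_id t).add_const h
      have h2 : HasDerivAt (fun t : ℝ => (t + h) ^ lam)
          (lam * (t + h) ^ (lam - 1) * 1) t :=
        HasDerivAt.comp t (Real.hasDerivAt_rpow_const
          (Or.inl (by positivity : (0:ℝ) < t + h).ne')) h1
      have h3 : HasDerivAt (fun t : ℝ => t ^ lam) (lam * t ^ (lam - 1)) t :=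
        Real.hasDerivAt_rpow_const (Or.inl ht.ne')
      exact ((h2.sub h3).const_mul c)
    apply antitoneOn_of_deriv_nonpos (convex_Ici x)
    · intro t ht
      have ht' : 0 < t := lt_of_lt_of_le hx ht
      exact (hderiv t ht').continuousAt.continuousWithinAt
    · intro t ht
      rw [interior_Ici] at ht
      have ht' : 0 < t := lt_trans hx ht
      exact (hderiv t ht').differentiableAt.differentiableWithinAt
    · intro t ht
      rw [interior_Ici] at ht
      have ht' : 0 < t := lt_trans hx ht
      rw [(hderiv t ht').deriv]
      have hle : (t + h) ^ (lam - 1) ≤ t ^ (lam - 1) :=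
        Real.rpow_le_rpow_of_nonpos ht' (by linarith) (by linarith)
      calc c * (lam * (t + h) ^ (lam - 1) * 1 - lam * t ^ (lam - 1))
          = (c * lam) * ((t + h) ^ (lam - 1) - t ^ (lam - 1)) := by ring
        _ ≤ 0 := mul_nonpos_of_nonneg_of_nonpos hclam.le (by linarith)
  exact key (by simp : x ∈ Set.Ici x) (by simpa using hxy) hxy

/-- the signed gain is monotone in the increment -/
lemma gain_mono (lam : ℝ) (hlam0 : lam ≠ 0) {x h h' : ℝ} (hx : 0 < x)
    (hh : 0 ≤ h') (hh' : h' ≤ h) :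
    (if 0 < lam then (1:ℝ) else -1) * ((x + h') ^ lam - x ^ lam)
      ≤ (if 0 < lam then (1:ℝ) else -1) * ((x + h) ^ lam - x ^ lam) := by
  rcases lt_or_gt_of_ne hlam0 with h1 | h1
  · simp only [if_neg (not_lt.mpr h1.le), neg_one_mul, neg_sub]
    have : (x + h) ^ lam ≤ (x + h') ^ lam :=
      Real.rpow_le_rpow_of_nonpos (by linarith) (by linarith) h1.le
    linarith
  · simp only [if_pos h1, one_mul]
    have : (x + h') ^ lam ≤ (x + h) ^ lam :=
      Real.rpow_le_rpow (by linarith) (by linarith) h1.le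
    linarith

/-- the signed gain is nonneg -/
lemma gain_nonneg (lam : ℝ) (hlam0 : lam ≠ 0) {x h : ℝ} (hx : 0 < x) (hh : 0 ≤ h) :
    0 ≤ (if 0 < lam then (1:ℝ) else -1) * ((x + h) ^ lam - x ^ lam) := by
  rcases lt_or_gt_of_ne hlam0 with h1 | h1
  · simp only [if_neg (not_lt.mpr h1.le), neg_one_mul, neg_sub, sub_nonneg]
    exact Real.rpow_le_rpow_of_nonpos hx (by linarith) h1.le
  · simp only [if_pos h1, one_mul, sub_nonneg]
    exact Real.rpow_le_rpow hx.le (by linarith) h1.le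

lemma greedy_sum_le {ι : Type*} [DecidableEq ι] (S G : Finset ι) (K : ι → ℝ)
    (hK0 : ∀ p ∈ G, 0 ≤ K p)
    (hcard : S.card ≤ G.card)
    (hdom : ∀ q ∈ S \ G, ∀ p ∈ G \ S, K q ≤ K p) :
    ∑ p ∈ S, K p ≤ ∑ p ∈ G, K p := by
  have h1 : ∑ p ∈ S ∩ G, K p + ∑ p ∈ S \ G, K p = ∑ p ∈ S, K p :=
    Finset.sum_inter_add_sum_sdiff S G K
  have h2 : ∑ p ∈ G ∩ S, K p + ∑ p ∈ G \ S, K p = ∑ p ∈ G, K p :=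
    Finset.sum_inter_add_sum_sdiff G S K
  rw [Finset.inter_comm] at h1
  have hcards : (S \ G).card ≤ (G \ S).card := by
    have e1 := Finset.card_inter_add_card_sdiff S G
    have e2 := Finset.card_inter_add_card_sdiff G S
    rw [Finset.inter_comm] at e1
    omega
  have hmain : ∑ p ∈ S \ G, K p ≤ ∑ p ∈ G \ S, K p := by
    rcases Finset.eq_empty_or_nonempty (S \ G) with he | hne
    · rw [he, Finset.sum_empty]
      exact Finset.sum_nonneg fun p hp => hK0 p (Finset.mem_sdiff.mp hp).1
    · have hGS : (G \ S).Nonempty := by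
        rw [← Finset.card_pos] at hne ⊢; omega
      set m : ℝ := (G \ S).inf' hGS K with hm
      have hm0 : 0 ≤ m := by
        obtain ⟨p, hp, hpe⟩ := Finset.exists_mem_eq_inf' hGS K
        rw [hm, hpe]
        exact hK0 p (Finset.mem_sdiff.mp hp).1
      calc ∑ p ∈ S \ G, K p ≤ (S \ G).card • m := by
            apply Finset.sum_le_card_nsmul
            intro q hq
            rw [hm, Finset.le_inf'_iff]
            exact fun p hp => hdom q hq p hp
        _ ≤ (G \ S).card • m := by
            rw [nsmul_eq_mul, nsmul_eq_mul]
            exact mul_le_mul_of_nonneg_right (by exact_mod_cast hcards) hm0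
        _ ≤ ∑ p ∈ G \ S, K p := Finset.card_nsmul_le_sum _ _ _
              (fun p hp => Finset.inf'_le K hp)
  linarith

lemma rank_lt_of_key_lt {ι : Type*} [DecidableEq ι] (T : Finset ι) (K : ι → ℝ)
    {p q : ι} (hq : q ∈ T) (h : K q < K p) :
    (T.filter (fun r => K p ≤ K r)).card < (T.filter (fun r => K q ≤ K r)).card := by
  apply Finset.card_lt_card
  rw [Finset.ssubset_iff_of_subset]
  · exact ⟨q, Finset.mem_filter.mpr ⟨hq, le_refl _⟩,
      fun hc => absurd ((Finset.mem_filter.mp hc).2) (not_le.mpr h)⟩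
  · intro x hx
    rw [Finset.mem_filter] at hx ⊢
    exact ⟨hx.1, le_trans h.le hx.2⟩

lemma rank_card {ι : Type*} [DecidableEq ι] (T : Finset ι) (K : ι → ℝ) (W : ℕ)
    (hdist : ∀ p ∈ T, ∀ q ∈ T, p ≠ q → K p ≠ K q) :
    (T.filter (fun p => (T.filter (fun q => K p ≤ K q)).card ≤ W)).card
      = min T.card W := by
  set r : ι → ℕ := fun p => (T.filter (fun q => K p ≤ K q)).card with hr
  have hinj : Set.InjOn r T := by
    intro p hp q hq hpq
    by_contra hne
    rcases lt_trichotomy (K p) (K q) with h | h | h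
    · exact absurd hpq (Nat.ne_of_gt (rank_lt_of_key_lt T K hp h))
    · exact hdist p hp q hq hne h
    · exact absurd hpq (Nat.ne_of_lt (rank_lt_of_key_lt T K hq h))
  have himsub : T.image r ⊆ Finset.Icc 1 T.card := by
    intro a ha
    obtain ⟨p, hp, rfl⟩ := Finset.mem_image.mp ha
    refine Finset.mem_Icc.mpr ⟨?_, Finset.card_filter_le _ _⟩
    exact Finset.card_pos.mpr ⟨p, Finset.mem_filter.mpr ⟨hp, le_refl _⟩⟩
  have him : T.image r = Finset.Icc 1 T.card := by
    apply Finset.eq_of_subset_of_card_le himsub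
    rw [Finset.card_image_of_injOn hinj, Nat.card_Icc]
    omega
  have h1 : (T.filter (fun p => r p ≤ W)).image r
      = (T.image r).filter (fun a => a ≤ W) := by
    ext a
    simp only [Finset.mem_image, Finset.mem_filter]
    constructor
    · rintro ⟨p, hp, rfl⟩
      exact ⟨⟨p, hp.1, rfl⟩, hp.2⟩
    · rintro ⟨⟨p, hp, rfl⟩, hle⟩
      exact ⟨p, ⟨hp, hle⟩, rfl⟩
  have h2 : (T.filter (fun p => r p ≤ W)).card
      = ((T.image r).filter (fun a => a ≤ W)).card := by
    rw [← h1, Finset.card_image_of_injOn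
      (hinj.mono (Finset.coe_subset.mpr (Finset.filter_subset _ _)))]
  rw [h2, him]
  have : (Finset.Icc 1 T.card).filter (fun a => a ≤ W) = Finset.Icc 1 (min T.card W) := by
    ext a; simp only [Finset.mem_filter, Finset.mem_Icc]; omega
  rw [this, Nat.card_Icc]; omega

/-- Theorem 1 of the paper: the queue allocation D*_g(W) = Σ_l 1{Q_{g,l} ≤ W}, where Q ranks
all increments by descending weighted gain for λ ∈ (0,1] and ascending weighted gain for
λ < 0 (no ties), is feasible and maximizes the CES objective
(Σ_g β_g (A_g + Σ_{l≤D_g} α_{g,l})^λ)^{1/λ} subject to 0 ≤ D_g ≤ D̄_g and Σ_g D_g ≤ W. -/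
theorem stmt_19 (N : ℕ) (β A : Fin N → ℝ) (α : Fin N → ℕ → ℝ) (Dbar : Fin N → ℕ)
    (lam : ℝ) (W : ℕ)
    (hβ : ∀ g, 0 < β g) (hA : ∀ g, 0 < A g) (hα : ∀ g l, 0 < α g l)
    (hmono : ∀ g l, α g (l + 1) ≤ α g l) (hlam1 : lam ≤ 1) (hlam0 : lam ≠ 0)
    (wgain : Fin N → ℕ → ℝ)
    (hwgain : ∀ g l, wgain g l = β g *
      ((A g + ∑ s ∈ Finset.range (l + 1), α g s) ^ lam
        - (A g + ∑ s ∈ Finset.range l, α g s) ^ lam))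
    (hnoties : ∀ g l j k, l < Dbar g → k < Dbar j → (g, l) ≠ (j, k) →
      wgain g l ≠ wgain j k)
    (key : Fin N → ℕ → ℝ)
    (hkey : ∀ g l, key g l = if 0 < lam then wgain g l else -wgain g l)
    (Q : Fin N → ℕ → ℕ)
    (hQ : ∀ g l, Q g l = ∑ j,
      ((Finset.range (Dbar j)).filter (fun k => key g l ≤ key j k)).card)
    (Dstar : Fin N → ℕ)
    (hDstar : ∀ g, Dstar g = ((Finset.range (Dbar g)).filter (fun l => Q g l ≤ W)).card) :
    (∑ g, Dstar g ≤ W) ∧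
    ∀ D : Fin N → ℕ, (∀ g, D g ≤ Dbar g) → ∑ g, D g ≤ W →
      (∑ g, β g * (A g + ∑ l ∈ Finset.range (D g), α g l) ^ lam) ^ (1 / lam)
        ≤ (∑ g, β g * (A g + ∑ l ∈ Finset.range (Dstar g), α g l) ^ lam) ^ (1 / lam) := by
  classical
  -- partial sums
  have hS0pos : ∀ g l, 0 < A g + ∑ s ∈ Finset.range l, α g s := fun g l =>
    add_pos_of_pos_of_nonneg (hA g) (Finset.sum_nonneg fun s _ => (hα g s).le)
  have hkey' : ∀ g l, key g l = β g * ((if 0 < lam then (1:ℝ) else -1) *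
      (((A g + ∑ s ∈ Finset.range l, α g s) + α g l) ^ lam
        - (A g + ∑ s ∈ Finset.range l, α g s) ^ lam)) := by
    intro g l
    rw [hkey, hwgain, Finset.sum_range_succ]
    split_ifs <;> ring_nf
  have hknn : ∀ g l, 0 ≤ key g l := by
    intro g l
    rw [hkey' g l]
    exact mul_nonneg (hβ g).le (gain_nonneg lam hlam0 (hS0pos g l) (hα g l).le)
  have hkanti : ∀ g, Antitone (key g) := by
    intro g
    apply antitone_nat_of_succ_le
    intro l
    rw [hkey' g l, hkey' g (l + 1)]
    have hstep : A g + ∑ s ∈ Finset.range (l + 1), α g s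
        = (A g + ∑ s ∈ Finset.range l, α g s) + α g l := by
      rw [Finset.sum_range_succ]; ring
    apply mul_le_mul_of_nonneg_left _ (hβ g).le
    calc (if 0 < lam then (1:ℝ) else -1) *
          (((A g + ∑ s ∈ Finset.range (l+1), α g s) + α g (l+1)) ^ lam
            - (A g + ∑ s ∈ Finset.range (l+1), α g s) ^ lam)
        ≤ (if 0 < lam then (1:ℝ) else -1) *
          (((A g + ∑ s ∈ Finset.range (l+1), α g s) + α g l) ^ lam
            - (A g + ∑ s ∈ Finset.range (l+1), α g s) ^ lam) :=
          gain_mono lam hlam0 (hS0pos g (l+1)) (hα g (l+1)).le (hmono g l)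
      _ ≤ (if 0 < lam then (1:ℝ) else -1) *
          (((A g + ∑ s ∈ Finset.range l, α g s) + α g l) ^ lam
            - (A g + ∑ s ∈ Finset.range l, α g s) ^ lam) := by
          rw [hstep]
          exact gain_anti lam (α g l) hlam1 hlam0 (hα g l).le (hS0pos g l)
            (le_add_of_nonneg_right (hα g l).le)
  -- combinatorial setup
  set T : Finset ((_ : Fin N) × ℕ) := Finset.univ.sigma (fun g => Finset.range (Dbar g))
    with hT
  set K : (Σ _ : Fin N, ℕ) → ℝ := fun p => key p.1 p.2 with hK
  have hdist : ∀ p ∈ T, ∀ q ∈ T, p ≠ q → K p ≠ K q := by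
    rintro ⟨g, l⟩ hp ⟨j, k⟩ hq hne heq
    rw [hT, Finset.mem_sigma, Finset.mem_range] at hp hq
    have hw : wgain g l = wgain j k := by
      rw [hK] at heq
      simp only at heq
      rw [hkey, hkey] at heq
      split_ifs at heq
      · exact heq
      · linarith
    have hne' : (g, l) ≠ (j, k) := by
      intro hpe
      rw [Prod.mk.injEq] at hpe
      exact hne (by rw [hpe.1, hpe.2])
    exact hnoties g l j k hp.2 hq.2 hne' hw
  have hQr : ∀ g l, Q g l = (T.filter (fun q => K ⟨g, l⟩ ≤ K q)).card := by
    intro g l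
    rw [hQ]
    have he : T.filter (fun q => K ⟨g, l⟩ ≤ K q)
        = Finset.univ.sigma (fun j =>
            (Finset.range (Dbar j)).filter (fun k => key g l ≤ key j k)) := by
      ext ⟨j, k⟩
      simp only [hT, hK, Finset.mem_filter, Finset.mem_sigma, Finset.mem_univ, true_and]
    rw [he, Finset.card_sigma]
  have hG : T.filter (fun p => (T.filter (fun q => K p ≤ K q)).card ≤ W)
      = Finset.univ.sigma (fun g =>
          (Finset.range (Dbar g)).filter (fun l => Q g l ≤ W)) := by
    ext ⟨g, l⟩
    simp only [Finset.mem_filter, Finset.mem_sigma, Finset.mem_univ, true_and]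
    rw [hQr g l]
    constructor
    · intro h
      rw [hT, Finset.mem_sigma] at h
      exact ⟨h.1.2, h.2⟩
    · intro h
      exact ⟨by rw [hT, Finset.mem_sigma]; exact ⟨Finset.mem_univ g, h.1⟩, h.2⟩
  have hGcard : (T.filter (fun p => (T.filter (fun q => K p ≤ K q)).card ≤ W)).card
      = min T.card W := rank_card T K W hdist
  have hsum_star : ∑ g, Dstar g
      = (T.filter (fun p => (T.filter (fun q => K p ≤ K q)).card ≤ W)).card := by
    rw [hG, Finset.card_sigma]
    exact Finset.sum_congr rfl fun g _ => hDstar g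
  have part1 : ∑ g, Dstar g ≤ W := by
    rw [hsum_star, hGcard]; exact min_le_right _ _
  have hfilter_range : ∀ g,
      (Finset.range (Dbar g)).filter (fun l => Q g l ≤ W) = Finset.range (Dstar g) := by
    intro g
    rw [hDstar]
    apply prefix_lemma
    intro a b hab hb
    rw [Finset.mem_filter, Finset.mem_range] at hb ⊢
    refine ⟨lt_of_le_of_lt hab hb.1, le_trans ?_ hb.2⟩
    rw [hQr g a, hQr g b]
    apply Finset.card_le_card
    intro q hq
    rw [Finset.mem_filter] at hq ⊢
    refine ⟨hq.1, le_trans ?_ hq.2⟩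
    rw [hK]
    exact hkanti g hab
  have hDsD : ∀ g, Dstar g ≤ Dbar g := by
    intro g
    rw [hDstar]
    exact (Finset.card_filter_le _ _).trans (by rw [Finset.card_range])
  have hGstar : T.filter (fun p => (T.filter (fun q => K p ≤ K q)).card ≤ W)
      = Finset.univ.sigma (fun g => Finset.range (Dstar g)) := by
    rw [hG]
    congr 1
    funext g
    exact hfilter_range g
  refine ⟨part1, ?_⟩
  intro D hDle hDW
  -- telescoping identity
  have hwk : ∀ g l, wgain g l = (if 0 < lam then (1:ℝ) else -1) * key g l := by
    intro g l
    rw [hkey]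
    split_ifs <;> ring
  have htel : ∀ E : Fin N → ℕ,
      ∑ g, β g * (A g + ∑ l ∈ Finset.range (E g), α g l) ^ lam
        = (∑ g, β g * (A g) ^ lam)
          + (if 0 < lam then (1:ℝ) else -1)
            * ∑ p ∈ Finset.univ.sigma (fun g => Finset.range (E g)), K p := by
    intro E
    have hper : ∀ g, β g * (A g + ∑ l ∈ Finset.range (E g), α g l) ^ lam
        = β g * (A g) ^ lam + ∑ l ∈ Finset.range (E g), wgain g l := by
      intro g
      have ht := Finset.sum_range_sub
        (f := fun l => β g * (A g + ∑ s ∈ Finset.range l, α g s) ^ lam) (n := E g)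
      simp only [Finset.range_zero, Finset.sum_empty, add_zero] at ht
      have he : ∀ l, wgain g l
          = β g * (A g + ∑ s ∈ Finset.range (l + 1), α g s) ^ lam
            - β g * (A g + ∑ s ∈ Finset.range l, α g s) ^ lam := by
        intro l; rw [hwgain]; ring
      rw [Finset.sum_congr rfl fun l _ => he l]
      rw [ht]
      ring
    rw [Finset.sum_congr rfl fun g _ => hper g, Finset.sum_add_distrib]
    congr 1
    rw [Finset.sum_sigma, Finset.mul_sum]
    refine Finset.sum_congr rfl fun g _ => ?_
    rw [Finset.mul_sum]
    exact Finset.sum_congr rfl fun l _ => hwk g l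
  -- greedy comparison
  have hSsub : (Finset.univ.sigma fun g => Finset.range (D g)) ⊆ T := by
    rintro ⟨g, l⟩ hp
    rw [Finset.mem_sigma, Finset.mem_range] at hp
    rw [hT, Finset.mem_sigma, Finset.mem_range]
    exact ⟨hp.1, lt_of_lt_of_le hp.2 (hDle g)⟩
  set G := T.filter (fun p => (T.filter (fun q => K p ≤ K q)).card ≤ W) with hGdef
  have hSDcard : (Finset.univ.sigma fun g => Finset.range (D g)).card = ∑ g, D g := by
    rw [Finset.card_sigma]
    exact Finset.sum_congr rfl fun g _ => Finset.card_range _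
  have hval : ∑ p ∈ (Finset.univ.sigma fun g => Finset.range (D g)), K p
      ≤ ∑ p ∈ G, K p := by
    apply greedy_sum_le
    · intro p _
      exact hknn p.1 p.2
    · rw [hGcard]
      refine le_min (Finset.card_le_card hSsub) ?_
      rw [hSDcard]; exact hDW
    · rintro q hq p hp
      rw [Finset.mem_sdiff] at hq hp
      have hqT : q ∈ T := hSsub hq.1
      by_contra hlt
      push_neg at hlt
      apply hq.2
      rw [hGdef, Finset.mem_filter]
      have hpG := hp.1
      rw [hGdef, Finset.mem_filter] at hpG
      refine ⟨hqT, le_trans (Finset.card_le_card ?_) hpG.2⟩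
      intro x hx
      rw [Finset.mem_filter] at hx ⊢
      exact ⟨hx.1, le_trans hlt.le hx.2⟩
  rcases isEmpty_or_nonempty (Fin N) with hN | hN
  · simp [Finset.univ_eq_empty]
  · have hpos : ∀ E : Fin N → ℕ,
        0 < ∑ g, β g * (A g + ∑ l ∈ Finset.range (E g), α g l) ^ lam := by
      intro E
      apply Finset.sum_pos _ Finset.univ_nonempty
      intro g _
      exact mul_pos (hβ g) (Real.rpow_pos_of_pos (hS0pos g (E g)) lam)
    have hDexp := htel D
    have hDsexp := htel Dstar
    rw [hGstar] at hval
    rcases lt_or_gt_of_ne hlam0 with hneg | hposl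
    · have hif : (if 0 < lam then (1:ℝ) else -1) = -1 := if_neg (not_lt.mpr hneg.le)
      rw [hif] at hDexp hDsexp
      have hle : ∑ g, β g * (A g + ∑ l ∈ Finset.range (Dstar g), α g l) ^ lam
          ≤ ∑ g, β g * (A g + ∑ l ∈ Finset.range (D g), α g l) ^ lam := by
        rw [hDexp, hDsexp]; linarith
      exact Real.rpow_le_rpow_of_nonpos (hpos Dstar) hle
        (le_of_lt (div_neg_of_pos_of_neg one_pos hneg))
    · have hif : (if 0 < lam then (1:ℝ) else -1) = 1 := if_pos hposl
      rw [hif] at hDexp hDsexp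
      have hle : ∑ g, β g * (A g + ∑ l ∈ Finset.range (D g), α g l) ^ lam
          ≤ ∑ g, β g * (A g + ∑ l ∈ Finset.range (Dstar g), α g l) ^ lam := by
        rw [hDexp, hDsexp]; linarith
      exact Real.rpow_le_rpow (hpos D).le hle (le_of_lt (div_pos one_pos hposl))
end
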